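/- Let G be a finite metabelian group and g ∈ G. Then the minimal left Engel sink of g^{-1} is contained in the minimal right Engel sink of g: 𝓛(g^{-1}) ⊆ 𝓡(g). -/

import Mathlib

open scoped commutatorElement

/-- Iterated left Engel commutator `[x, _n h]` of elements, with `[x, _0 h] = x`. -/
def lEngel {H : Type} [Group H] (h : H) : H → ℕ → H
  | x, 0 => x
  | x, n + 1 => ⁅lEngel h x n, h⁆

/-- Iterated right Engel commutator `[a, _n x]`, with `[a, _0 x] = a`. -/
def rEngel {H : Type} [Group H] (a : H) : H → ℕ → H
  | x, 0 => a
  | x, n + 1 => ⁅rEngel a x n, x⁆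

/-- A left Engel sink of `h`. -/
def IsLeftEngelSink {H : Type} [Group H] (h : H) (L : Set H) : Prop :=
  ∀ x : H, ∃ N : ℕ, ∀ n ≥ N, lEngel h x n ∈ L

/-- The minimal left Engel sink of `h`. -/
def IsMinLeftEngelSink {H : Type} [Group H] (h : H) (L : Set H) : Prop :=
  IsLeftEngelSink h L ∧ ∀ L' : Set H, IsLeftEngelSink h L' → L ⊆ L'

/-- A right Engel sink of `a`. -/
def IsRightEngelSink {H : Type} [Group H] (a : H) (R : Set H) : Prop :=
  ∀ x : H, ∃ N : ℕ, ∀ n ≥ N, rEngel a x n ∈ R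

/-- The minimal right Engel sink of `a`. -/
def IsMinRightEngelSink {H : Type} [Group H] (a : H) (R : Set H) : Prop :=
  IsRightEngelSink a R ∧ ∀ R' : Set H, IsRightEngelSink a R' → R ⊆ R'



lemma lEngel_succ_mem_commutator {G : Type} [Group G] (h x : G) (n : ℕ) :
    lEngel h x (n + 1) ∈ commutator G := by
  rw [commutator_def]
  exact Subgroup.commutator_mem_commutator (Subgroup.mem_top _) (Subgroup.mem_top _)

lemma absorb {G : Type} [Group G] (c l h : G) (hcl : c * l = l * c) :
    ⁅c, h * l⁆ = ⁅c, h⁆ := by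
  have h1 : l * c⁻¹ = c⁻¹ * l := by
    have := congrArg (fun t => c⁻¹ * t * c⁻¹) hcl
    simpa [mul_assoc] using this
  simp only [commutatorElement_def, mul_inv_rev]
  calc c * (h * l) * c⁻¹ * (l⁻¹ * h⁻¹)
      = c * h * (l * c⁻¹ * l⁻¹) * h⁻¹ := by group
    _ = c * h * (c⁻¹ * l * l⁻¹) * h⁻¹ := by rw [h1]
    _ = c * h * c⁻¹ * h⁻¹ := by group

lemma base {G : Type} [Group G] (g l : G) : ⁅g, g⁻¹ * l⁆ = ⁅l, g⁻¹⁆ := by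
  simp only [commutatorElement_def, mul_inv_rev]
  group

lemma key {G : Type} [Group G]
    (hmeta : ∀ x ∈ commutator G, ∀ y ∈ commutator G, x * y = y * x) (g x : G) :
    ∀ n, 1 ≤ n → rEngel g (g⁻¹ * ⁅x, g⁻¹⁆) n = lEngel g⁻¹ x (n + 1) := by
  intro n hn
  induction n with
  | zero => omega
  | succ m ih =>
    rcases Nat.eq_or_lt_of_le hn with h1 | h1
    · -- m + 1 = 1, i.e. m = 0
      have hm : m = 0 := by omega
      subst hm
      show ⁅rEngel g (g⁻¹ * ⁅x, g⁻¹⁆) 0, g⁻¹ * ⁅x, g⁻¹⁆⁆ = ⁅lEngel g⁻¹ x 1, g⁻¹⁆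
      show ⁅g, g⁻¹ * ⁅x, g⁻¹⁆⁆ = ⁅lEngel g⁻¹ x 1, g⁻¹⁆
      rw [base]
      rfl
    · have hm : 1 ≤ m := by omega
      show ⁅rEngel g (g⁻¹ * ⁅x, g⁻¹⁆) m, g⁻¹ * ⁅x, g⁻¹⁆⁆ = ⁅lEngel g⁻¹ x (m + 1), g⁻¹⁆
      rw [ih hm]
      apply absorb
      exact hmeta _ (lEngel_succ_mem_commutator g⁻¹ x m) _
        (by rw [commutator_def]; exact Subgroup.commutator_mem_commutator (Subgroup.mem_top _) (Subgroup.mem_top _))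


/-- In a finite metabelian group, `𝓛(g⁻¹) ⊆ 𝓡(g)`. -/
theorem stmt9 (G : Type) [Group G] [Finite G]
    (hmeta : ∀ x ∈ commutator G, ∀ y ∈ commutator G, x * y = y * x) (g : G)
    (L R : Set G) (hL : IsMinLeftEngelSink g⁻¹ L) (hR : IsMinRightEngelSink g R) :
    L ⊆ R := by
  apply hL.2
  intro x
  obtain ⟨N, hN⟩ := hR.1 (g⁻¹ * ⁅x, g⁻¹⁆)
  refine ⟨N + 2, fun n hn => ?_⟩
  obtain ⟨m, rfl⟩ : ∃ m, n = (m + 1) + 1 := ⟨n - 2, by omega⟩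
  rw [← key hmeta g x (m + 1) (by omega)]
  exact hN (m + 1) (by omega)
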